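/- arXiv:2004.07616 — 2 statements merged into one kernel-verified Lean document; each statement's English description precedes it below -/
import Mathlib

section
/- Let L > 0, a ∈ (0,1). Define f₁(s) = tan(L√(1−s²)) and f₂(s) = aL√(1−s²)/(a − Ls) for s ∈ (0,1). If 0 < a < L < 1, then there exists s₀ ∈ (0, a/L) with f₁(s₀) = f₂(s₀). -/
theorem stmt_0 (L a : ℝ) (ha : 0 < a) (haL : a < L) (hL : L < 1) :
    ∃ s₀ ∈ Set.Ioo (0:ℝ) (a / L),
      Real.tan (L * Real.sqrt (1 - s₀^2)) =
        a * L * Real.sqrt (1 - s₀^2) / (a - L * s₀) := by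
  have hL0 : (0:ℝ) < L := ha.trans haL
  set t : ℝ := a / L with ht
  have ht0 : 0 < t := div_pos ha hL0
  have ht1 : t < 1 := (div_lt_one hL0).mpr haL
  set g : ℝ → ℝ := fun s =>
    Real.tan (L * Real.sqrt (1 - s^2)) * (a - L * s) - a * L * Real.sqrt (1 - s^2)
    with hg
  have hmaps : ∀ s : ℝ, Real.cos (L * Real.sqrt (1 - s^2)) ≠ 0 := by
    intro s
    have h1 : Real.sqrt (1 - s^2) ≤ 1 :=
      Real.sqrt_le_one.mpr (by nlinarith [sq_nonneg s])
    have h3 : L * Real.sqrt (1 - s^2) < Real.pi / 2 := by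
      nlinarith [Real.pi_gt_three, Real.sqrt_nonneg (1 - s^2)]
    have h4 : 0 ≤ L * Real.sqrt (1 - s^2) :=
      mul_nonneg hL0.le (Real.sqrt_nonneg _)
    have h5 : -(Real.pi / 2) < L * Real.sqrt (1 - s^2) := by
      linarith [Real.pi_pos]
    exact ne_of_gt (Real.cos_pos_of_mem_Ioo ⟨h5, h3⟩)
  have hcont : ContinuousOn g (Set.Icc 0 t) := by
    have hinner : Continuous fun s : ℝ => L * Real.sqrt (1 - s^2) := by
      continuity
    have htan : Continuous fun s : ℝ => Real.tan (L * Real.sqrt (1 - s^2)) := by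
      rw [continuous_iff_continuousAt]
      intro s
      exact ContinuousAt.comp (f := fun s : ℝ => L * Real.sqrt (1 - s^2))
        (Real.continuousAt_tan.mpr (hmaps s)) hinner.continuousAt
    exact Continuous.continuousOn (by continuity)
  -- g 0 > 0
  have hg0 : 0 < g 0 := by
    have h1 : Real.sqrt (1 - (0:ℝ)^2) = 1 := by norm_num
    have h2 : L < Real.tan L := Real.lt_tan hL0 (by nlinarith [Real.pi_gt_three])
    simp only [hg, h1, mul_one, mul_zero, sub_zero]
    nlinarith [mul_pos ha (sub_pos.mpr h2)]
  -- g t < 0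
  have hgt : g t < 0 := by
    have h1 : a - L * t = 0 := by rw [ht, sub_eq_zero]; field_simp
    have h2 : 0 < Real.sqrt (1 - t^2) :=
      Real.sqrt_pos.mpr (by nlinarith)
    simp only [hg, h1, mul_zero, zero_sub, neg_neg]
    nlinarith [mul_pos (mul_pos ha hL0) h2]
  have h0 : (0:ℝ) ∈ Set.Ioo (g t) (g 0) := ⟨hgt, hg0⟩
  obtain ⟨c, hc, hgc⟩ := intermediate_value_Ioo' ht0.le hcont h0
  refine ⟨c, hc, ?_⟩
  have hden : 0 < a - L * c := by
    have : c < t := hc.2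
    have : L * c < L * t := by exact mul_lt_mul_of_pos_left this hL0
    rw [ht] at this
    have : L * c < a := by
      calc L * c < L * (a / L) := by linarith
        _ = a := by field_simp
    linarith
  have := hgc
  simp only [hg] at this
  field_simp
  linarith [this]
end

section
/- Let β > 0, A ≥ 1, L > 0, K(p) = ∫_{Ap}^∞ (sin α)/α dα. Then there is C such that for all t ∈ ℝ and all 0 < s ≤ r ≤ L, |(1/r)·(e^{−βs} K(t+r+s) − e^{βs} K(t+r−s))| ≤ C·(s/r) ≤ C. -/
open Real intervalIntegral MeasureTheory Set Filter

private lemma sinc_abs_le_one (α : ℝ) : |Real.sin α / α| ≤ 1 := by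
  rcases eq_or_ne α 0 with h | h
  · simp [h]
  · rw [abs_div]
    exact div_le_one_of_le₀ Real.abs_sin_le_abs (abs_nonneg _)

private lemma sinc_intInt (a b : ℝ) :
    IntervalIntegrable (fun α => Real.sin α / α) volume a b := by
  apply (_root_.intervalIntegrable_const (c := (1:ℝ))).mono_fun
  · exact (Real.measurable_sin.div measurable_id).aestronglyMeasurable
  · exact Filter.Eventually.of_forall fun x => by
      show ‖Real.sin x / x‖ ≤ ‖(1:ℝ)‖
      rw [Real.norm_eq_abs, norm_one]
      exact sinc_abs_le_one x

private lemma parts_bound {x : ℝ} (hx : 1 ≤ x) :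
    |∫ α in (1:ℝ)..x, Real.sin α / α| ≤ 3 := by
  have hne : ∀ α ∈ Set.uIcc (1:ℝ) x, α ≠ 0 := by
    intro α hα
    rw [Set.uIcc_of_le hx] at hα
    have := hα.1; positivity
  have hu : ∀ α ∈ Set.uIcc (1:ℝ) x, HasDerivAt (fun y : ℝ => y⁻¹) (-((α^2)⁻¹)) α :=
    fun α hα => by simpa using hasDerivAt_inv (hne α hα)
  have hv : ∀ α ∈ Set.uIcc (1:ℝ) x, HasDerivAt (fun y : ℝ => -Real.cos y) (Real.sin α) α :=
    fun α _ => by have h := (Real.hasDerivAt_cos α).neg; rw [neg_neg] at h; exact h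
  have hu' : IntervalIntegrable (fun α : ℝ => -((α^2)⁻¹)) volume 1 x := by
    apply ContinuousOn.intervalIntegrable
    exact ((continuousOn_pow 2).inv₀ fun α hα => pow_ne_zero _ (hne α hα)).neg
  have hv' : IntervalIntegrable Real.sin volume 1 x :=
    Real.continuous_sin.intervalIntegrable _ _
  have key := intervalIntegral.integral_mul_deriv_eq_deriv_mul hu hv hu' hv'
  have heq : (∫ α in (1:ℝ)..x, Real.sin α / α)
      = (∫ α in (1:ℝ)..x, (fun y : ℝ => y⁻¹) α * Real.sin α) :=
    intervalIntegral.integral_congr fun α _ => by simp [div_eq_inv_mul]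
  have hinv2 : IntervalIntegrable (fun α : ℝ => ((α:ℝ)^2)⁻¹) volume 1 x := by
    convert hu'.neg using 1
    funext α
    simp
  have habs : IntervalIntegrable (fun α : ℝ => |(-((α^2)⁻¹)) * (-Real.cos α)|) volume 1 x := by
    apply ContinuousOn.intervalIntegrable
    exact ((((continuousOn_pow 2).inv₀ fun α hα => pow_ne_zero _ (hne α hα)).neg.mul
      Real.continuous_cos.continuousOn.neg)).abs
  have hFTC : (∫ α in (1:ℝ)..x, -((α^2)⁻¹)) = x⁻¹ - (1:ℝ)⁻¹ :=
    intervalIntegral.integral_eq_sub_of_hasDerivAt (fun α hα => hu α hα) hu'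
  have hval : (∫ α in (1:ℝ)..x, ((α:ℝ)^2)⁻¹) = (1:ℝ)⁻¹ - x⁻¹ := by
    have := intervalIntegral.integral_neg (μ := volume) (f := fun α : ℝ => ((α:ℝ)^2)⁻¹) (a := 1) (b := x)
    rw [hFTC] at this
    linarith [this]
  have hb1 : |∫ α in (1:ℝ)..x, -((α^2)⁻¹) * (-Real.cos α)| ≤ 1 := by
    have h1 : |∫ α in (1:ℝ)..x, -((α^2)⁻¹) * (-Real.cos α)|
        ≤ ∫ α in (1:ℝ)..x, |(-((α^2)⁻¹)) * (-Real.cos α)| :=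
      intervalIntegral.abs_integral_le_integral_abs hx
    have h2 : (∫ α in (1:ℝ)..x, |(-((α^2)⁻¹)) * (-Real.cos α)|)
        ≤ ∫ α in (1:ℝ)..x, ((α:ℝ)^2)⁻¹ := by
      apply intervalIntegral.integral_mono_on hx habs hinv2
      intro α hα
      have hα0 : (0:ℝ) < α := lt_of_lt_of_le one_pos hα.1
      rw [abs_mul, abs_neg, abs_neg, abs_inv, abs_of_pos (by positivity : (0:ℝ) < α^2)]
      calc (α^2)⁻¹ * |Real.cos α| ≤ (α^2)⁻¹ * 1 :=
            mul_le_mul_of_nonneg_left (Real.abs_cos_le_one α) (by positivity)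
        _ = (α^2)⁻¹ := mul_one _
    have hx0 : (0:ℝ) < x := lt_of_lt_of_le one_pos hx
    have hxi : (0:ℝ) ≤ x⁻¹ := by positivity
    rw [hval] at h2
    have h0 : (0:ℝ) ≤ |∫ α in (1:ℝ)..x, -((α^2)⁻¹) * (-Real.cos α)| := abs_nonneg _
    rw [inv_one] at h2
    linarith
  rw [heq, key]
  have hx0 : (0:ℝ) < x := lt_of_lt_of_le one_pos hx
  have h4 : |x⁻¹ * (-Real.cos x)| ≤ 1 := by
    rw [abs_mul, abs_neg, abs_inv, abs_of_pos hx0]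
    calc x⁻¹ * |Real.cos x| ≤ 1 * 1 := by
          apply mul_le_mul _ (Real.abs_cos_le_one x) (abs_nonneg _) zero_le_one
          rw [inv_le_one_iff₀]; right; exact hx
      _ = 1 := one_mul 1
  have h5 : |(1:ℝ)⁻¹ * (-Real.cos 1)| ≤ 1 := by
    rw [abs_mul, abs_neg]
    simpa using Real.abs_cos_le_one 1
  calc |(fun y : ℝ => y⁻¹) x * (-Real.cos x) - (fun y : ℝ => y⁻¹) 1 * (-Real.cos 1)
        - ∫ α in (1:ℝ)..x, -((α^2)⁻¹) * (-Real.cos α)|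
      ≤ |x⁻¹ * (-Real.cos x)| + |(1:ℝ)⁻¹ * (-Real.cos 1)|
        + |∫ α in (1:ℝ)..x, -((α^2)⁻¹) * (-Real.cos α)| := by
        simp only []
        exact (abs_sub _ _).trans (by gcongr; exact abs_sub _ _) |>.trans le_rfl
    _ ≤ 1 + 1 + 1 := by gcongr
    _ = 3 := by norm_num

private lemma F_bound (x : ℝ) : |∫ α in (0:ℝ)..x, Real.sin α / α| ≤ 4 := by
  have key : ∀ y : ℝ, 0 ≤ y → |∫ α in (0:ℝ)..y, Real.sin α / α| ≤ 4 := by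
    intro y hy
    rcases le_or_gt y 1 with h1 | h1
    · have := intervalIntegral.norm_integral_le_of_norm_le_const
        (a := (0:ℝ)) (b := y) (C := 1) (f := fun α => Real.sin α / α)
        (fun α _ => by simpa [Real.norm_eq_abs, abs_div] using sinc_abs_le_one α)
      rw [Real.norm_eq_abs] at this
      have : |∫ α in (0:ℝ)..y, Real.sin α / α| ≤ 1 * |y - 0| := this
      rw [one_mul, sub_zero, abs_of_nonneg hy] at this
      linarith
    · have hsplit : (∫ α in (0:ℝ)..1, Real.sin α / α) + (∫ α in (1:ℝ)..y, Real.sin α / α)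
          = ∫ α in (0:ℝ)..y, Real.sin α / α :=
        intervalIntegral.integral_add_adjacent_intervals (sinc_intInt 0 1) (sinc_intInt 1 y)
      have hb1 : |∫ α in (0:ℝ)..1, Real.sin α / α| ≤ 1 := by
        have := intervalIntegral.norm_integral_le_of_norm_le_const
          (a := (0:ℝ)) (b := 1) (C := 1) (f := fun α => Real.sin α / α)
          (fun α _ => by simpa [Real.norm_eq_abs, abs_div] using sinc_abs_le_one α)
        rw [Real.norm_eq_abs] at this
        simpa using this
      have hb2 := parts_bound h1.le
      rw [← hsplit]
      calc |(∫ α in (0:ℝ)..1, Real.sin α / α) + ∫ α in (1:ℝ)..y, Real.sin α / α|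
          ≤ |∫ α in (0:ℝ)..1, Real.sin α / α| + |∫ α in (1:ℝ)..y, Real.sin α / α| :=
            abs_add_le _ _
        _ ≤ 1 + 3 := by gcongr
        _ = 4 := by norm_num
  rcases le_or_gt 0 x with hx | hx
  · exact key x hx
  · have hodd : (∫ α in (0:ℝ)..(-x), Real.sin α / α) = -∫ α in (0:ℝ)..x, Real.sin α / α := by
      have : (∫ α in (0:ℝ)..(-x), Real.sin α / α)
          = ∫ α in (0:ℝ)..(-x), Real.sin (-α) / (-α) := by
        apply intervalIntegral.integral_congr
        intro α _
        simp [Real.sin_neg, neg_div_neg_eq]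
      rw [this, intervalIntegral.integral_comp_neg (fun α => Real.sin α / α)]
      rw [neg_neg, neg_zero]
      rw [← intervalIntegral.integral_symm]
    have := key (-x) (by linarith)
    rw [hodd, abs_neg] at this
    exact this

theorem stmt_11 (β A L : ℝ) (hβ : 0 < β) (hA : 1 ≤ A) (hL : 0 < L)
    (K : ℝ → ℝ)
    (hK : ∀ p, Filter.Tendsto (fun R => ∫ α in (A*p)..R, Real.sin α / α)
      Filter.atTop (nhds (K p))) :
    ∃ C : ℝ, ∀ (t r s : ℝ), 0 < s → s ≤ r → r ≤ L →
      |(1/r) * (Real.exp (-β*s) * K (t+r+s) - Real.exp (β*s) * K (t+r-s))| ≤ C * (s/r) ∧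
      C * (s/r) ≤ C := by
  have hA0 : (0:ℝ) < A := lt_of_lt_of_le one_pos hA
  have hK0 : Filter.Tendsto (fun R => ∫ α in (0:ℝ)..R, Real.sin α / α)
      Filter.atTop (nhds (K 0)) := by simpa using hK 0
  have hKabs0 : |K 0| ≤ 4 :=
    le_of_tendsto hK0.abs (Filter.Eventually.of_forall fun R => F_bound R)
  have hKp : ∀ p, K p = K 0 - ∫ α in (0:ℝ)..(A*p), Real.sin α / α := by
    intro p
    have h1 : Filter.Tendsto
        (fun R => (∫ α in (0:ℝ)..R, Real.sin α / α) - ∫ α in (0:ℝ)..(A*p), Real.sin α / α)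
        Filter.atTop (nhds (K 0 - ∫ α in (0:ℝ)..(A*p), Real.sin α / α)) :=
      hK0.sub_const _
    have h2 : (fun R => (∫ α in (0:ℝ)..R, Real.sin α / α) - ∫ α in (0:ℝ)..(A*p), Real.sin α / α)
        = fun R => ∫ α in (A*p)..R, Real.sin α / α := by
      funext R
      exact intervalIntegral.integral_interval_sub_left (sinc_intInt 0 R) (sinc_intInt 0 (A*p))
    rw [h2] at h1
    exact tendsto_nhds_unique (hK p) h1
  have hKbnd : ∀ p, |K p| ≤ 8 := by
    intro p
    rw [hKp p, sub_eq_add_neg]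
    calc |K 0 + -(∫ α in (0:ℝ)..(A*p), Real.sin α / α)|
        ≤ |K 0| + |-(∫ α in (0:ℝ)..(A*p), Real.sin α / α)| := abs_add_le _ _
      _ ≤ 4 + 4 := by rw [abs_neg]; exact add_le_add hKabs0 (F_bound _)
      _ = 8 := by norm_num
  have hLip : ∀ p q : ℝ, |K p - K q| ≤ A * |p - q| := by
    intro p q
    have hdiff : K p - K q
        = (∫ α in (0:ℝ)..(A*q), Real.sin α / α) - ∫ α in (0:ℝ)..(A*p), Real.sin α / α := by
      rw [hKp p, hKp q]; ring
    have hsub : (∫ α in (0:ℝ)..(A*q), Real.sin α / α) - (∫ α in (0:ℝ)..(A*p), Real.sin α / α)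
        = ∫ α in (A*p)..(A*q), Real.sin α / α :=
      intervalIntegral.integral_interval_sub_left (sinc_intInt 0 (A*q)) (sinc_intInt 0 (A*p))
    rw [hdiff, hsub]
    have hb := intervalIntegral.norm_integral_le_of_norm_le_const
      (a := A*p) (b := A*q) (C := 1) (f := fun α => Real.sin α / α)
      (fun α _ => by rw [Real.norm_eq_abs]; exact sinc_abs_le_one α)
    rw [Real.norm_eq_abs, one_mul] at hb
    calc |∫ α in (A*p)..(A*q), Real.sin α / α| ≤ |A*q - A*p| := hb
      _ = A * |p - q| := by
          rw [← mul_sub, abs_mul, abs_of_pos hA0, abs_sub_comm]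
  set C := 8*β + 2*A + 8*β*Real.exp (β*L) with hC
  have hC0 : 0 ≤ C := by positivity
  refine ⟨C, fun t r s hs hsr hrL => ?_⟩
  have hr : 0 < r := lt_of_lt_of_le hs hsr
  have hβs : 0 < β*s := by positivity
  have hβsL : β*s ≤ β*L := by nlinarith
  rw [neg_mul]
  -- exponential bounds
  have hexp1 := Real.add_one_le_exp (-(β*s))
  have hexp2 : Real.exp (-(β*s)) ≤ 1 := by
    rw [← Real.exp_zero]
    exact Real.exp_le_exp.mpr (by nlinarith)
  have e1 : |Real.exp (-(β*s)) - 1| ≤ β*s := by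
    rw [abs_of_nonpos (by linarith)]
    linarith
  have hmul : Real.exp (-(β*s)) * Real.exp (β*s) = 1 := by
    rw [← Real.exp_add, show -(β*s) + β*s = 0 by ring, Real.exp_zero]
  have hexp3 : Real.exp (β*s) ≤ Real.exp (β*L) := Real.exp_le_exp.mpr hβsL
  have hexp4 : (1:ℝ) ≤ Real.exp (β*s) := by
    rw [← Real.exp_zero]
    exact Real.exp_le_exp.mpr (by linarith)
  have e2 : |1 - Real.exp (β*s)| ≤ β*s * Real.exp (β*L) := by
    rw [abs_of_nonpos (by linarith)]
    have hp := Real.exp_pos (β*s)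
    nlinarith [hexp1, hmul, hexp3]
  -- kernel bounds
  have ha := hKbnd (t+r+s)
  have hb := hKbnd (t+r-s)
  have hlip := hLip (t+r+s) (t+r-s)
  have habs2 : |(t+r+s) - (t+r-s)| = 2*s := by
    rw [show (t+r+s) - (t+r-s) = 2*s by ring, abs_of_pos (by linarith)]
  rw [habs2] at hlip
  -- main bound
  have hDb : |Real.exp (-(β*s)) * K (t+r+s) - Real.exp (β*s) * K (t+r-s)| ≤ C * s := by
    have hD : Real.exp (-(β*s)) * K (t+r+s) - Real.exp (β*s) * K (t+r-s)
        = (Real.exp (-(β*s)) - 1) * K (t+r+s) + (K (t+r+s) - K (t+r-s))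
          + (1 - Real.exp (β*s)) * K (t+r-s) := by ring
    rw [hD]
    have b1 : |(Real.exp (-(β*s)) - 1) * K (t+r+s)| ≤ (β*s) * 8 := by
      rw [abs_mul]
      exact mul_le_mul e1 ha (abs_nonneg _) hβs.le
    have b3 : |(1 - Real.exp (β*s)) * K (t+r-s)| ≤ (β*s * Real.exp (β*L)) * 8 := by
      rw [abs_mul]
      exact mul_le_mul e2 hb (abs_nonneg _) (by positivity)
    have htri := abs_add_three ((Real.exp (-(β*s)) - 1) * K (t+r+s))
      (K (t+r+s) - K (t+r-s)) ((1 - Real.exp (β*s)) * K (t+r-s))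
    have hring : (β*s) * 8 + A * (2*s) + (β*s * Real.exp (β*L)) * 8 = C * s := by
      rw [hC]; ring
    linarith
  constructor
  · rw [abs_mul, abs_of_pos (by positivity : (0:ℝ) < 1/r)]
    calc (1/r) * |Real.exp (-(β*s)) * K (t+r+s) - Real.exp (β*s) * K (t+r-s)|
        ≤ (1/r) * (C * s) := by
          exact mul_le_mul_of_nonneg_left hDb (by positivity)
      _ = C * (s/r) := by ring
  · have hsr1 : s/r ≤ 1 := (div_le_one hr).mpr hsr
    calc C * (s/r) ≤ C * 1 := mul_le_mul_of_nonneg_left hsr1 hC0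
      _ = C := mul_one C
end
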